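/- Let K be a nonempty finite index set, c > 0, and for each k ∈ K let f_k : (0, ∞) → ℝ be continuous and strictly decreasing with f_k(b) → ∞ as b → 0⁺. Then there exist a unique real number d and a unique vector (b_k)_{k∈K} with b_k ∈ (0, c] for all k, Σ_{k∈K} b_k = c, and f_k(b_k) = d for all k. -/

import Mathlib

/-- For continuous, strictly decreasing delay functions blowing up at zero bandwidth,
there is a unique common delay value `d` and a unique positive allocation exhausting
the budget `c` at which all delays equal `d`. -/
theorem exists_unique_equal_delay_allocation
    {ι : Type*} [Fintype ι] [Nonempty ι]
    (c : ℝ) (hc : 0 < c)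
    (f : ι → ℝ → ℝ)
    (hcont : ∀ k, ContinuousOn (f k) (Set.Ioi 0))
    (hanti : ∀ k, StrictAntiOn (f k) (Set.Ioi 0))
    (hblow : ∀ k, Filter.Tendsto (f k) (nhdsWithin 0 (Set.Ioi 0)) Filter.atTop) :
    ∃! p : ℝ × (ι → ℝ),
      (∀ k, p.2 k ∈ Set.Ioc 0 c) ∧ (∑ k, p.2 k = c) ∧ (∀ k, f k (p.2 k) = p.1) := by
  classical
  have hcIoi : c ∈ Set.Ioi (0:ℝ) := hc
  -- existence of preimages by IVT
  have hex : ∀ k d, f k c ≤ d → ∃ b, b ∈ Set.Ioc 0 c ∧ f k b = d := by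
    intro k d hd
    have h1 : ∀ᶠ x in nhdsWithin 0 (Set.Ioi 0), d ≤ f k x :=
      (hblow k).eventually (Filter.eventually_ge_atTop d)
    have h2 : Set.Ioo (0:ℝ) c ∈ nhdsWithin 0 (Set.Ioi 0) :=
      Ioo_mem_nhdsGT_of_mem ⟨le_refl 0, hc⟩
    obtain ⟨ε, hεd, hε⟩ := (h1.and (Filter.eventually_of_mem h2 (fun x hx => hx))).exists
    have hεc : ε ≤ c := hε.2.le
    have hsub : Set.Icc ε c ⊆ Set.Ioi (0:ℝ) := fun x hx => lt_of_lt_of_le hε.1 hx.1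
    have hiv := intermediate_value_Icc' hεc ((hcont k).mono hsub)
    obtain ⟨b, hb, hfb⟩ := hiv ⟨hd, hεd⟩
    exact ⟨b, ⟨lt_of_lt_of_le hε.1 hb.1, hb.2⟩, hfb⟩
  -- the inverse function
  set g : ι → ℝ → ℝ := fun k d =>
    if h : ∃ b, b ∈ Set.Ioc 0 c ∧ f k b = d then h.choose else c with hgdef
  have hg : ∀ k d, f k c ≤ d → g k d ∈ Set.Ioc 0 c ∧ f k (g k d) = d := by
    intro k d hd
    have h := hex k d hd
    simp only [hgdef, dif_pos h]
    exact h.choose_spec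
  have hmem : ∀ {b : ℝ}, b ∈ Set.Ioc 0 c → b ∈ Set.Ioi (0:ℝ) := fun hb => hb.1
  -- uniqueness of preimages
  have hgu : ∀ k d b, b ∈ Set.Ioc 0 c → f k b = d → g k d = b := by
    intro k d b hb hfb
    have hd : f k c ≤ d := by
      rw [← hfb]; exact ((hanti k).le_iff_ge hcIoi (hmem hb)).2 hb.2
    have h := hg k d hd
    exact (hanti k).injOn (hmem h.1) (hmem hb) (h.2.trans hfb.symm)
  -- monotonicity of g
  have hga : ∀ k d₁ d₂, f k c ≤ d₁ → d₁ ≤ d₂ → g k d₂ ≤ g k d₁ := by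
    intro k d₁ d₂ h1 h12
    have hA := hg k d₁ h1
    have hB := hg k d₂ (h1.trans h12)
    exact ((hanti k).le_iff_ge (hmem hA.1) (hmem hB.1)).1 (by rw [hA.2, hB.2]; exact h12)
  have hgs : ∀ k d₁ d₂, f k c ≤ d₁ → d₁ < d₂ → g k d₂ < g k d₁ := by
    intro k d₁ d₂ h1 h12
    have hA := hg k d₁ h1
    have hB := hg k d₂ (h1.trans h12.le)
    exact ((hanti k).lt_iff_gt (hmem hA.1) (hmem hB.1)).1 (by rw [hA.2, hB.2]; exact h12)
  set D : ℝ := Finset.univ.sup' Finset.univ_nonempty (fun k => f k c) with hDdef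
  have hDk : ∀ k, f k c ≤ D := fun k => by
    rw [hDdef]; exact Finset.le_sup' (fun k => f k c) (Finset.mem_univ k)
  obtain ⟨k₀, -, hk₀⟩ := Finset.exists_mem_eq_sup' (Finset.univ_nonempty (α := ι)) (fun k => f k c)
  have hk₀' : f k₀ c = D := by rw [hDdef]; exact hk₀.symm
  set S : ℝ → ℝ := fun d => ∑ k, g k d with hSdef
  -- S is strictly antitone on [D, ∞)
  have hSanti : ∀ d₁ d₂, D ≤ d₁ → d₁ ≤ d₂ → S d₂ ≤ S d₁ :=
    fun d₁ d₂ h1 h12 => Finset.sum_le_sum fun k _ => hga k d₁ d₂ ((hDk k).trans h1) h12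
  have hSstrict : ∀ d₁ d₂, D ≤ d₁ → d₁ < d₂ → S d₂ < S d₁ :=
    fun d₁ d₂ h1 h12 => Finset.sum_lt_sum_of_nonempty Finset.univ_nonempty
      fun k _ => hgs k d₁ d₂ ((hDk k).trans h1) h12
  have hgpos : ∀ k d, D ≤ d → 0 < g k d := fun k d hd => (hg k d ((hDk k).trans hd)).1.1
  have hglec : ∀ k d, D ≤ d → g k d ≤ c := fun k d hd => (hg k d ((hDk k).trans hd)).1.2
  -- S D ≥ c
  have hSD : c ≤ S D := by
    have h0 : g k₀ D = c := hgu k₀ D c ⟨hc, le_refl c⟩ hk₀'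
    calc c = g k₀ D := h0.symm
    _ ≤ S D := Finset.single_le_sum (fun k _ => (hgpos k D le_rfl).le) (Finset.mem_univ k₀)
  set n : ℕ := Fintype.card ι with hndef
  have hn : 0 < (n:ℝ) := by exact_mod_cast Fintype.card_pos
  set A : Set ℝ := {d | D ≤ d ∧ c ≤ S d} with hAdef
  have hDA : D ∈ A := ⟨le_rfl, hSD⟩
  -- bounded above
  have hε : c / n ∈ Set.Ioc 0 c := by
    constructor
    · positivity
    · rw [div_le_iff₀ hn]
      nlinarith [hn, (by exact_mod_cast Fintype.card_pos : (1:ℝ) ≤ n)]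
  set d₁ : ℝ := D ⊔ Finset.univ.sup' Finset.univ_nonempty (fun k => f k (c / n)) with hd1def
  have hSd₁ : S d₁ ≤ c := by
    have h : ∀ k, g k d₁ ≤ c / n := by
      intro k
      have hfε : f k c ≤ f k (c / n) :=
        ((hanti k).le_iff_ge hcIoi (hmem hε)).2 hε.2
      have hεd₁ : f k (c / n) ≤ d₁ := by
        rw [hd1def]; exact le_sup_of_le_right (Finset.le_sup' (fun k => f k (c / (n:ℝ))) (Finset.mem_univ k))
      calc g k d₁ ≤ g k (f k (c / n)) := hga k _ _ hfε hεd₁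
      _ = c / n := hgu k _ _ hε rfl
    calc S d₁ ≤ ∑ _k : ι, c / n := Finset.sum_le_sum fun k _ => h k
    _ = n * (c / n) := by rw [Finset.sum_const, Finset.card_univ, nsmul_eq_mul]
    _ = c := by field_simp
  have hbdd : BddAbove A := by
    refine ⟨d₁, fun d hd => ?_⟩
    by_contra h
    push_neg at h
    have := hSstrict d₁ d le_sup_left h
    linarith [hd.2, hSd₁]
  set ds : ℝ := sSup A with hdsdef
  have hdsD : D ≤ ds := (le_csSup hbdd hDA).trans_eq' rfl
  have hbelow : ∀ d, D ≤ d → d < ds → c ≤ S d := by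
    intro d hDd hdlt
    obtain ⟨d'', hd''A, hd''⟩ := exists_lt_of_lt_csSup ⟨D, hDA⟩ hdlt
    exact hd''A.2.trans (hSanti d d'' hDd hd''.le)
  -- S ds = c
  have hSds : S ds = c := by
    rcases lt_trichotomy (S ds) c with h | h | h
    · -- S ds < c : contradiction
      exfalso
      set δ : ℝ := c - S ds with hδdef
      have hδ : 0 < δ := by simp only [hδdef]; linarith
      have hglt : ∀ k, g k ds < c := by
        intro k
        rcases lt_or_eq_of_le (hglec k ds hdsD) with h' | h'
        · exact h'
        · exfalso
          have : c ≤ S ds := by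
            calc c = g k ds := h'.symm
            _ ≤ S ds := Finset.single_le_sum (fun j _ => (hgpos j ds hdsD).le)
                (Finset.mem_univ k)
          linarith
      set b : ι → ℝ := fun k => min c (g k ds + δ / (2 * n)) with hbdef
      have hbmem : ∀ k, b k ∈ Set.Ioc 0 c := fun k =>
        ⟨lt_min hc (by have := hgpos k ds hdsD; positivity), min_le_left _ _⟩
      have hbgt : ∀ k, g k ds < b k := fun k =>
        lt_min (hglt k) (lt_add_of_pos_right _ (by positivity))
      have hfb : ∀ k, f k (b k) < ds := by
        intro k
        have := ((hanti k).lt_iff_gt (hmem (hbmem k)) (hmem (hg k ds ((hDk k).trans hdsD)).1)).2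
          (hbgt k)
        rwa [(hg k ds ((hDk k).trans hdsD)).2] at this
      have hDlt : D < ds := by
        rcases lt_or_eq_of_le hdsD with h' | h'
        · exact h'
        · exfalso; rw [← h'] at h; linarith [hSD]
      set d : ℝ := D ⊔ Finset.univ.sup' Finset.univ_nonempty (fun k => f k (b k)) with hddef
      have hdlt : d < ds := by
        rw [hddef]
        apply sup_lt_iff.2
        exact ⟨hDlt, (Finset.sup'_lt_iff _).2 fun k _ => hfb k⟩
      have hcled : c ≤ S d := hbelow d (by rw [hddef]; exact le_sup_left) hdlt
      have hgb : ∀ k, g k d ≤ b k := by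
        intro k
        have h1 : f k c ≤ f k (b k) :=
          ((hanti k).le_iff_ge hcIoi (hmem (hbmem k))).2 (hbmem k).2
        have h2 : f k (b k) ≤ d := by
          rw [hddef]; exact le_sup_of_le_right (Finset.le_sup' (fun k => f k (b k)) (Finset.mem_univ k))
        calc g k d ≤ g k (f k (b k)) := hga k _ _ h1 h2
        _ = b k := hgu k _ _ (hbmem k) rfl
      have hsum : S d ≤ S ds + δ / 2 := by
        calc S d ≤ ∑ k, b k := Finset.sum_le_sum fun k _ => hgb k
        _ ≤ ∑ k, (g k ds + δ / (2 * n)) := Finset.sum_le_sum fun k _ => min_le_right _ _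
        _ = S ds + n * (δ / (2 * n)) := by
            rw [Finset.sum_add_distrib, Finset.sum_const, Finset.card_univ, nsmul_eq_mul, hSdef]
        _ = S ds + δ / 2 := by
            have : (n:ℝ) * (δ / (2 * n)) = δ / 2 := by field_simp
            rw [this]
      have : S ds + δ / 2 < c := by simp only [hδdef]; linarith
      linarith
    · exact h
    · -- S ds > c : contradiction
      exfalso
      set δ : ℝ := S ds - c with hδdef
      have hδ : 0 < δ := by simp only [hδdef]; linarith
      set b : ι → ℝ := fun k => max (g k ds - δ / n) (g k ds / 2) with hbdef
      have hbpos : ∀ k, 0 < b k := fun k =>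
        lt_max_of_lt_right (by have := hgpos k ds hdsD; linarith)
      have hblt : ∀ k, b k < g k ds := fun k =>
        max_lt (sub_lt_self _ (by positivity))
          (by have := hgpos k ds hdsD; linarith)
      have hbmem : ∀ k, b k ∈ Set.Ioc 0 c := fun k =>
        ⟨hbpos k, ((hblt k).le.trans (hglec k ds hdsD))⟩
      have hfb : ∀ k, ds < f k (b k) := by
        intro k
        have := ((hanti k).lt_iff_gt (hmem (hg k ds ((hDk k).trans hdsD)).1)
          (hmem (hbmem k))).2 (hblt k)
        rwa [(hg k ds ((hDk k).trans hdsD)).2] at this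
      set d' : ℝ := Finset.univ.inf' Finset.univ_nonempty (fun k => f k (b k)) with hd'def
      have hd'gt : ds < d' := by
        rw [hd'def]; exact (Finset.lt_inf'_iff _).2 fun k _ => hfb k
      have hgb : ∀ k, b k ≤ g k d' := by
        intro k
        have h1 : f k c ≤ f k (b k) :=
          ((hanti k).le_iff_ge hcIoi (hmem (hbmem k))).2 (hbmem k).2
        have h2 : d' ≤ f k (b k) := by
          rw [hd'def]; exact Finset.inf'_le _ (Finset.mem_univ k)
        calc b k = g k (f k (b k)) := (hgu k _ _ (hbmem k) rfl).symm
        _ ≤ g k d' := hga k _ _ ((hDk k).trans (hdsD.trans hd'gt.le)) h2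
      have hsum : S ds - δ ≤ S d' := by
        calc S ds - δ = ∑ k, (g k ds - δ / n) := by
              rw [Finset.sum_sub_distrib, Finset.sum_const, Finset.card_univ, nsmul_eq_mul, hSdef]
              have : (n:ℝ) * (δ / n) = δ := by field_simp
              rw [this]
        _ ≤ ∑ k, b k := Finset.sum_le_sum fun k _ => le_max_left _ _
        _ ≤ S d' := Finset.sum_le_sum fun k _ => hgb k
      have hd'A : d' ∈ A := ⟨hdsD.trans hd'gt.le, by simp only [hδdef] at hsum; linarith⟩
      exact absurd (le_csSup hbdd hd'A) (not_le.2 hd'gt)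
  -- assemble
  refine ⟨(ds, fun k => g k ds), ⟨fun k => (hg k ds ((hDk k).trans hdsD)).1, hSds,
    fun k => (hg k ds ((hDk k).trans hdsD)).2⟩, ?_⟩
  rintro ⟨d, b⟩ ⟨hb1, hb2, hb3⟩
  dsimp only at hb1 hb2 hb3
  have hdD : D ≤ d := by
    rw [hDdef]
    apply Finset.sup'_le
    intro k _
    rw [← hb3 k]
    exact ((hanti k).le_iff_ge hcIoi (hmem (hb1 k))).2 (hb1 k).2
  have hbg : ∀ k, b k = g k d := fun k => (hgu k d (b k) (hb1 k) (hb3 k)).symm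
  have hSd : S d = c := by
    have : (∑ k, g k d) = ∑ k, b k := Finset.sum_congr rfl fun k _ => (hbg k).symm
    rw [hSdef]; exact this.trans hb2
  have hdds : d = ds := by
    rcases lt_trichotomy d ds with h | h | h
    · have := hSstrict d ds hdD h; rw [hSd, hSds] at this; linarith
    · exact h
    · have := hSstrict ds d hdsD h; rw [hSd, hSds] at this; linarith
  subst hdds
  exact Prod.ext rfl (funext hbg)
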